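/- Let κ ≥ 1/2, and suppose f, g : [0,a] → ℂ satisfy |f(x)| ≤ c₁ x^κ, |g(x)| ≤ c₁ x^{κ+1}, |1/f(x)| ≤ c₂ x^{-κ}, |p₂(x)|^{1/2}/|f(x)| ≤ c₂ x^{-κ} for x ∈ (0,a], with c₁, c₂ ≥ 1, and let c₃ bound all |r_{ij}| on [0,a], ã = max{1,a}. Define recursively X̂⁽⁰⁾ = f, Ŷ⁽⁰⁾ = g, Ẑ⁽ⁿ⁾(x) = ∫₀ˣ [X̂⁽ⁿ⁾ (f r₁₁ + g r₂₁) + Ŷ⁽ⁿ⁾ (f r₁₂ + g r₂₂)] dt, X̂⁽ⁿ⁺¹⁾(x) = (n+1) f(x) ∫₀ˣ [ -(r₂₁/f) X̂⁽ⁿ⁾ - (r₂₂/f) Ŷ⁽ⁿ⁾ + (p₂/f²) Ẑ⁽ⁿ⁾ ] dt, Ŷ⁽ⁿ⁺¹⁾(x) = (n+1) Ẑ⁽ⁿ⁾(x)/f(x) + (g(x)/f(x)) X̂⁽ⁿ⁺¹⁾(x). Then for all n ≥ 1 and x ∈ (0,a]: |X̂⁽ⁿ⁾(x)| ≤ c₁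 Mⁿ x^{n+κ} and |Ŷ⁽ⁿ⁾(x)| ≤ c₁ Mⁿ x^{n+κ}, where M = c₂ M_Z + c₁ c₂ ã M_X, M_Z = c₁ c₃ (1+ã)², M_X = c₁ c₂ c₃ [(1+ã) + c₁ c₂ (1+ã)² a]. -/

import Mathlib

open Set Filter Topology intervalIntegral MeasureTheory

lemma norm_int_le (h : ℝ → ℂ) (x C p : ℝ) (hx : 0 < x) (hp : (-1:ℝ) < p) (hC : 0 ≤ C)
    (hb : ∀ t ∈ Set.Ioc (0:ℝ) x, ‖h t‖ ≤ C * t ^ p) :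
    ‖∫ t in (0:ℝ)..x, h t‖ ≤ C * x ^ (p+1) / (p+1) := by
  have hint : IntervalIntegrable (fun t => C * t ^ p) volume 0 x :=
    (intervalIntegrable_rpow' hp).const_mul C
  have hae : ∀ᵐ t ∂(volume.restrict (Set.uIoc (0:ℝ) x)), ‖h t‖ ≤ C * t ^ p := by
    rw [Set.uIoc_of_le hx.le]
    exact ae_restrict_of_forall_mem measurableSet_Ioc hb
  have := intervalIntegral.norm_integral_le_abs_of_norm_le hae hint
  have hcalc : (∫ t in (0:ℝ)..x, C * t ^ p) = C * x ^ (p+1) / (p+1) := by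
    rw [intervalIntegral.integral_const_mul, integral_rpow (Or.inl hp)]
    rw [Real.zero_rpow (by linarith)]
    ring
  rw [hcalc] at this
  refine this.trans (le_of_eq (abs_of_nonneg ?_))
  have : (0:ℝ) ≤ x ^ (p+1) := Real.rpow_nonneg hx.le _
  have hp1 : (0:ℝ) < p + 1 := by linarith
  have : (0:ℝ) ≤ C * x ^ (p+1) := mul_nonneg hC this
  exact div_nonneg this hp1.le

set_option maxHeartbeats 2000000 in
theorem formal_powers_bounds (a κ c₁ c₂ c₃ atil M MZ MX : ℝ)
    (ha : 0 < a) (hκ : 1 / 2 ≤ κ) (hc₁ : 1 ≤ c₁) (hc₂ : 1 ≤ c₂)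
    (hatil : atil = max 1 a)
    (hMZ : MZ = c₁ * c₃ * (1 + atil) ^ 2)
    (hMX : MX = c₁ * c₂ * c₃ * ((1 + atil) + c₁ * c₂ * (1 + atil) ^ 2 * a))
    (hM : M = c₂ * MZ + c₁ * c₂ * atil * MX)
    (p₂ r₁₁ r₁₂ r₂₁ r₂₂ f g : ℝ → ℂ)
    (hr : ∀ x ∈ Set.Icc (0:ℝ) a,
      ‖r₁₁ x‖ ≤ c₃ ∧ ‖r₁₂ x‖ ≤ c₃ ∧ ‖r₂₁ x‖ ≤ c₃ ∧ ‖r₂₂ x‖ ≤ c₃)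
    (hfne : ∀ x ∈ Set.Ioc (0:ℝ) a, f x ≠ 0)
    (hfb : ∀ x ∈ Set.Ioc (0:ℝ) a, ‖f x‖ ≤ c₁ * x ^ κ)
    (hgb : ∀ x ∈ Set.Ioc (0:ℝ) a, ‖g x‖ ≤ c₁ * x ^ (κ + 1))
    (hfinv : ∀ x ∈ Set.Ioc (0:ℝ) a, ‖(f x)⁻¹‖ ≤ c₂ * x ^ (-κ))
    (hpf : ∀ x ∈ Set.Ioc (0:ℝ) a, ‖p₂ x‖ ^ ((1:ℝ)/2) / ‖f x‖ ≤ c₂ * x ^ (-κ))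
    (X Y Z : ℕ → ℝ → ℂ)
    (hX0 : X 0 = f) (hY0 : Y 0 = g)
    (hZ : ∀ n, ∀ x ∈ Set.Ioc (0:ℝ) a, Z n x = ∫ t in (0:ℝ)..x,
      (X n t * (f t * r₁₁ t + g t * r₂₁ t) + Y n t * (f t * r₁₂ t + g t * r₂₂ t)))
    (hXrec : ∀ n, ∀ x ∈ Set.Ioc (0:ℝ) a,
      X (n + 1) x = ((n : ℂ) + 1) * f x * ∫ t in (0:ℝ)..x,
        (-(r₂₁ t / f t) * X n t - r₂₂ t / f t * Y n t + p₂ t / f t ^ 2 * Z n t))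
    (hYrec : ∀ n, ∀ x ∈ Set.Ioc (0:ℝ) a,
      Y (n + 1) x = ((n : ℂ) + 1) * Z n x / f x + g x / f x * X (n + 1) x)
    (hintZ : ∀ n, ∀ x ∈ Set.Ioc (0:ℝ) a, IntervalIntegrable
      (fun t => X n t * (f t * r₁₁ t + g t * r₂₁ t)
        + Y n t * (f t * r₁₂ t + g t * r₂₂ t)) volume 0 x)
    (hintX : ∀ n, ∀ x ∈ Set.Ioc (0:ℝ) a, IntervalIntegrable
      (fun t => -(r₂₁ t / f t) * X n t - r₂₂ t / f t * Y n t
        + p₂ t / f t ^ 2 * Z n t) volume 0 x) :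
    ∀ n : ℕ, 1 ≤ n → ∀ x ∈ Set.Ioc (0:ℝ) a,
      ‖X n x‖ ≤ c₁ * M ^ n * x ^ ((n : ℝ) + κ) ∧
      ‖Y n x‖ ≤ c₁ * M ^ n * x ^ ((n : ℝ) + κ) := by
  have hc₁0 : (0:ℝ) ≤ c₁ := by linarith
  have hc₂0 : (0:ℝ) ≤ c₂ := by linarith
  have hat1 : (1:ℝ) ≤ atil := hatil ▸ le_max_left 1 a
  have haat : a ≤ atil := hatil ▸ le_max_right 1 a
  have hat0 : (0:ℝ) ≤ atil := by linarith
  have hc₃ : (0:ℝ) ≤ c₃ := le_trans (norm_nonneg _) ((hr 0 ⟨le_refl 0, ha.le⟩).1)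
  have hMZ0 : 0 ≤ MZ := by
    rw [hMZ]; exact mul_nonneg (mul_nonneg hc₁0 hc₃) (sq_nonneg _)
  have hMX0 : 0 ≤ MX := by
    rw [hMX]
    have h1 : (0:ℝ) ≤ (1 + atil) + c₁ * c₂ * (1 + atil) ^ 2 * a := by
      have := mul_nonneg (mul_nonneg (mul_nonneg hc₁0 hc₂0) (sq_nonneg (1+atil))) ha.le
      nlinarith
    exact mul_nonneg (mul_nonneg (mul_nonneg hc₁0 hc₂0) hc₃) h1
  have hM0 : 0 ≤ M := by
    rw [hM]
    have h1 := mul_nonneg (mul_nonneg (mul_nonneg hc₁0 hc₂0) hat0) hMX0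
    nlinarith [mul_nonneg hc₂0 hMZ0]
  have hMXM : MX ≤ M := by
    rw [hM]
    have h12 : (1:ℝ) ≤ c₁ * c₂ := by nlinarith
    have h1 : (1:ℝ) ≤ c₁ * c₂ * atil := by nlinarith [mul_le_mul_of_nonneg_left hat1 (by linarith : (0:ℝ) ≤ c₁*c₂)]
    have h2 := mul_le_mul_of_nonneg_right h1 hMX0
    have h3 := mul_nonneg hc₂0 hMZ0
    nlinarith
  -- key inductive step
  have key : ∀ n : ℕ,
      (∀ t ∈ Set.Ioc (0:ℝ) a, ‖X n t‖ ≤ c₁ * M ^ n * t ^ ((n:ℝ) + κ) ∧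
        ‖Y n t‖ ≤ c₁ * atil * M ^ n * t ^ ((n:ℝ) + κ)) →
      ∀ x ∈ Set.Ioc (0:ℝ) a,
        ‖X (n+1) x‖ ≤ c₁ * MX * M ^ n * x ^ (((n:ℝ) + 1) + κ) ∧
        ‖Y (n+1) x‖ ≤ c₁ * M ^ (n+1) * x ^ (((n:ℝ) + 1) + κ) := by
    intro n ih
    have hMn : (0:ℝ) ≤ M ^ n := pow_nonneg hM0 n
    have hn0 : (0:ℝ) ≤ (n:ℝ) := Nat.cast_nonneg n
    have hn1 : (0:ℝ) < (n:ℝ) + 1 := by linarith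
    -- Z integrand bound
    have hZint : ∀ t ∈ Set.Ioc (0:ℝ) a,
        ‖X n t * (f t * r₁₁ t + g t * r₂₁ t) + Y n t * (f t * r₁₂ t + g t * r₂₂ t)‖
          ≤ (c₁ * MZ * M ^ n) * t ^ ((n:ℝ) + 2*κ) := by
      intro t ht
      obtain ⟨ht0, hta⟩ := ht
      obtain ⟨h11, h12, h21, h22⟩ := hr t ⟨ht0.le, hta⟩
      have htk : (0:ℝ) ≤ t ^ κ := Real.rpow_nonneg ht0.le κ
      have htat : t ≤ atil := hta.trans haat
      have e1 : t ^ (κ+1) ≤ atil * t ^ κ := by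
        rw [Real.rpow_add_one ht0.ne' κ]; nlinarith
      have hcf : (0:ℝ) ≤ c₁ * t ^ κ := mul_nonneg hc₁0 htk
      have hcf1 : (0:ℝ) ≤ c₁ * t ^ (κ+1) := mul_nonneg hc₁0 (Real.rpow_nonneg ht0.le _)
      have hA : ‖f t * r₁₁ t + g t * r₂₁ t‖ ≤ c₁ * c₃ * (1+atil) * t ^ κ := by
        calc ‖f t * r₁₁ t + g t * r₂₁ t‖ ≤ ‖f t‖ * ‖r₁₁ t‖ + ‖g t‖ * ‖r₂₁ t‖ := by
              refine (norm_add_le _ _).trans ?_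
              rw [norm_mul, norm_mul]
          _ ≤ (c₁ * t ^ κ) * c₃ + (c₁ * t ^ (κ+1)) * c₃ :=
              add_le_add (mul_le_mul (hfb t ⟨ht0, hta⟩) h11 (norm_nonneg _) hcf)
                (mul_le_mul (hgb t ⟨ht0, hta⟩) h21 (norm_nonneg _) hcf1)
          _ ≤ c₁ * c₃ * (1+atil) * t ^ κ := by
              nlinarith [mul_le_mul_of_nonneg_left e1 (mul_nonneg hc₁0 hc₃)]
      have hB : ‖f t * r₁₂ t + g t * r₂₂ t‖ ≤ c₁ * c₃ * (1+atil) * t ^ κ := by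
        calc ‖f t * r₁₂ t + g t * r₂₂ t‖ ≤ ‖f t‖ * ‖r₁₂ t‖ + ‖g t‖ * ‖r₂₂ t‖ := by
              refine (norm_add_le _ _).trans ?_
              rw [norm_mul, norm_mul]
          _ ≤ (c₁ * t ^ κ) * c₃ + (c₁ * t ^ (κ+1)) * c₃ :=
              add_le_add (mul_le_mul (hfb t ⟨ht0, hta⟩) h12 (norm_nonneg _) hcf)
                (mul_le_mul (hgb t ⟨ht0, hta⟩) h22 (norm_nonneg _) hcf1)
          _ ≤ c₁ * c₃ * (1+atil) * t ^ κ := by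
              nlinarith [mul_le_mul_of_nonneg_left e1 (mul_nonneg hc₁0 hc₃)]
      have hXt := (ih t ⟨ht0, hta⟩).1
      have hYt := (ih t ⟨ht0, hta⟩).2
      have hXtn : (0:ℝ) ≤ c₁ * M^n * t^((n:ℝ)+κ) :=
        mul_nonneg (mul_nonneg hc₁0 hMn) (Real.rpow_nonneg ht0.le _)
      have hYtn : (0:ℝ) ≤ c₁ * atil * M^n * t^((n:ℝ)+κ) :=
        mul_nonneg (mul_nonneg (mul_nonneg hc₁0 hat0) hMn) (Real.rpow_nonneg ht0.le _)
      calc ‖X n t * (f t * r₁₁ t + g t * r₂₁ t) + Y n t * (f t * r₁₂ t + g t * r₂₂ t)‖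
          ≤ ‖X n t‖ * ‖f t * r₁₁ t + g t * r₂₁ t‖ + ‖Y n t‖ * ‖f t * r₁₂ t + g t * r₂₂ t‖ := by
            refine (norm_add_le _ _).trans ?_
            rw [norm_mul, norm_mul]
        _ ≤ (c₁ * M^n * t^((n:ℝ)+κ)) * (c₁ * c₃ * (1+atil) * t ^ κ)
            + (c₁ * atil * M^n * t^((n:ℝ)+κ)) * (c₁ * c₃ * (1+atil) * t ^ κ) :=
            add_le_add (mul_le_mul hXt hA (norm_nonneg _) hXtn)
              (mul_le_mul hYt hB (norm_nonneg _) hYtn)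
        _ = (c₁ * MZ * M ^ n) * t ^ ((n:ℝ) + 2*κ) := by
            have e : t^((n:ℝ)+κ) * t^κ = t^((n:ℝ)+2*κ) := by
              rw [← Real.rpow_add ht0, show ((n:ℝ)+κ)+κ = (n:ℝ)+2*κ by ring]
            rw [hMZ, ← e]; ring
    -- Z bound
    have hCZ : (0:ℝ) ≤ c₁ * MZ * M ^ n := mul_nonneg (mul_nonneg hc₁0 hMZ0) hMn
    have hZb : ∀ x ∈ Set.Ioc (0:ℝ) a,
        ‖Z n x‖ ≤ (c₁ * MZ * M ^ n) * x ^ ((n:ℝ) + 2*κ + 1) / ((n:ℝ)+1) := by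
      intro x hx
      have hp : (-1:ℝ) < (n:ℝ) + 2*κ := by linarith
      have h1 := norm_int_le _ x (c₁*MZ*M^n) ((n:ℝ)+2*κ) hx.1 hp hCZ
        (fun t ht => hZint t ⟨ht.1, ht.2.trans hx.2⟩)
      rw [hZ n x hx]
      refine h1.trans ?_
      exact div_le_div_of_nonneg_left
        (mul_nonneg hCZ (Real.rpow_nonneg hx.1.le _)) hn1 (by linarith)
    -- X integrand bound
    have hXint : ∀ t ∈ Set.Ioc (0:ℝ) a,
        ‖-(r₂₁ t / f t) * X n t - r₂₂ t / f t * Y n t + p₂ t / f t ^ 2 * Z n t‖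
          ≤ (MX * M ^ n) * t ^ ((n:ℝ)) := by
      intro t ht
      obtain ⟨ht0, hta⟩ := ht
      obtain ⟨h11, h12, h21, h22⟩ := hr t ⟨ht0.le, hta⟩
      have hXt := (ih t ⟨ht0, hta⟩).1
      have hYt := (ih t ⟨ht0, hta⟩).2
      have hZt := hZb t ⟨ht0, hta⟩
      have hfi := hfinv t ⟨ht0, hta⟩
      have htmk : (0:ℝ) ≤ t ^ (-κ) := Real.rpow_nonneg ht0.le _
      have hctm : (0:ℝ) ≤ c₂ * t ^ (-κ) := mul_nonneg hc₂0 htmk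
      have hXtn : (0:ℝ) ≤ c₁ * M^n * t^((n:ℝ)+κ) :=
        mul_nonneg (mul_nonneg hc₁0 hMn) (Real.rpow_nonneg ht0.le _)
      have hYtn : (0:ℝ) ≤ c₁ * atil * M^n * t^((n:ℝ)+κ) :=
        mul_nonneg (mul_nonneg (mul_nonneg hc₁0 hat0) hMn) (Real.rpow_nonneg ht0.le _)
      have hb1 : ‖-(r₂₁ t / f t) * X n t‖
          ≤ (c₃ * (c₂ * t ^ (-κ))) * (c₁ * M ^ n * t ^ ((n:ℝ)+κ)) := by
        rw [norm_mul, norm_neg]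
        refine mul_le_mul ?_ hXt (norm_nonneg _) (mul_nonneg hc₃ hctm)
        rw [div_eq_mul_inv, norm_mul]
        exact mul_le_mul h21 hfi (norm_nonneg _) hc₃
      have hb2 : ‖r₂₂ t / f t * Y n t‖
          ≤ (c₃ * (c₂ * t ^ (-κ))) * (c₁ * atil * M ^ n * t ^ ((n:ℝ)+κ)) := by
        rw [norm_mul]
        refine mul_le_mul ?_ hYt (norm_nonneg _) (mul_nonneg hc₃ hctm)
        rw [div_eq_mul_inv, norm_mul]
        exact mul_le_mul h22 hfi (norm_nonneg _) hc₃
      have hf0 : (0:ℝ) < ‖f t‖ := norm_pos_iff.mpr (hfne t ⟨ht0, hta⟩)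
      have hp2 : ‖p₂ t‖ ≤ (c₂ * t ^ (-κ))^2 * ‖f t‖^2 := by
        have h := hpf t ⟨ht0, hta⟩
        rw [div_le_iff₀ hf0] at h
        have h3 := pow_le_pow_left₀ (Real.rpow_nonneg (norm_nonneg _) _) h 2
        have h4 : (‖p₂ t‖ ^ ((1:ℝ)/2))^2 = ‖p₂ t‖ := by
          rw [← Real.rpow_natCast (‖p₂ t‖ ^ ((1:ℝ)/2)) 2, ← Real.rpow_mul (norm_nonneg _)]
          norm_num
        rw [h4] at h3
        calc ‖p₂ t‖ ≤ (c₂ * t ^ (-κ) * ‖f t‖)^2 := h3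
          _ = (c₂ * t ^ (-κ))^2 * ‖f t‖^2 := by ring
      have hb3 : ‖p₂ t / f t ^ 2 * Z n t‖
          ≤ ((c₂ * t ^ (-κ))^2) * ((c₁ * MZ * M ^ n) * t ^ ((n:ℝ) + 2*κ + 1) / ((n:ℝ)+1)) := by
        rw [norm_mul, norm_div, norm_pow]
        refine mul_le_mul ?_ hZt (norm_nonneg _) (sq_nonneg _)
        rw [div_le_iff₀ (pow_pos hf0 2)]
        exact hp2
      have htot : ‖-(r₂₁ t / f t) * X n t - r₂₂ t / f t * Y n t + p₂ t / f t ^ 2 * Z n t‖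
          ≤ (c₃*(c₂*t^(-κ)))*(c₁*M^n*t^((n:ℝ)+κ))
            + (c₃*(c₂*t^(-κ)))*(c₁*atil*M^n*t^((n:ℝ)+κ))
            + ((c₂*t^(-κ))^2) * ((c₁*MZ*M^n) * t^((n:ℝ)+2*κ+1)/((n:ℝ)+1)) := by
        refine (norm_add_le _ _).trans ?_
        have hs := norm_sub_le (-(r₂₁ t / f t) * X n t) (r₂₂ t / f t * Y n t)
        linarith
      refine htot.trans ?_
      have id1 : t^(-κ) * t^((n:ℝ)+κ) = t^((n:ℝ)) := by
        rw [← Real.rpow_add ht0, show -κ + ((n:ℝ)+κ) = (n:ℝ) by ring]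
      have id2 : (t^(-κ))^2 * t^((n:ℝ)+2*κ+1) = t^((n:ℝ)) * t := by
        rw [← Real.rpow_natCast (t^(-κ)) 2, ← Real.rpow_mul ht0.le, ← Real.rpow_add ht0,
          show (-κ) * ((2:ℕ):ℝ) + ((n:ℝ)+2*κ+1) = (n:ℝ)+1 by push_cast; ring,
          Real.rpow_add_one ht0.ne']
      have t1 : (c₃*(c₂*t^(-κ)))*(c₁*M^n*t^((n:ℝ)+κ))
          = c₁*c₂*c₃*M^n * t^((n:ℝ)) := by
        calc (c₃*(c₂*t^(-κ)))*(c₁*M^n*t^((n:ℝ)+κ))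
            = (c₁*c₂*c₃*M^n) * (t^(-κ) * t^((n:ℝ)+κ)) := by ring
          _ = c₁*c₂*c₃*M^n * t^((n:ℝ)) := by rw [id1]
      have t2 : (c₃*(c₂*t^(-κ)))*(c₁*atil*M^n*t^((n:ℝ)+κ))
          = c₁*c₂*c₃*atil*M^n * t^((n:ℝ)) := by
        calc (c₃*(c₂*t^(-κ)))*(c₁*atil*M^n*t^((n:ℝ)+κ))
            = (c₁*c₂*c₃*atil*M^n) * (t^(-κ) * t^((n:ℝ)+κ)) := by ring
          _ = c₁*c₂*c₃*atil*M^n * t^((n:ℝ)) := by rw [id1]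
      have t3 : ((c₂*t^(-κ))^2) * ((c₁*MZ*M^n) * t^((n:ℝ)+2*κ+1)/((n:ℝ)+1))
          = (c₂^2*c₁*MZ*M^n/((n:ℝ)+1)) * (t^((n:ℝ)) * t) := by
        calc ((c₂*t^(-κ))^2) * ((c₁*MZ*M^n) * t^((n:ℝ)+2*κ+1)/((n:ℝ)+1))
            = (c₂^2*c₁*MZ*M^n/((n:ℝ)+1)) * ((t^(-κ))^2 * t^((n:ℝ)+2*κ+1)) := by ring
          _ = (c₂^2*c₁*MZ*M^n/((n:ℝ)+1)) * (t^((n:ℝ)) * t) := by rw [id2]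
      rw [t1, t2, t3]
      have hw : (0:ℝ) ≤ t^((n:ℝ)) := Real.rpow_nonneg ht0.le _
      have hC3 : (0:ℝ) ≤ c₂^2*c₁*MZ*M^n := by positivity
      have h5 : c₂^2*c₁*MZ*M^n/((n:ℝ)+1) ≤ c₂^2*c₁*MZ*M^n :=
        div_le_self hC3 (by linarith)
      have h6 : t^((n:ℝ)) * t ≤ t^((n:ℝ)) * a :=
        mul_le_mul_of_nonneg_left hta hw
      have h7 : (c₂^2*c₁*MZ*M^n/((n:ℝ)+1)) * (t^((n:ℝ)) * t)
          ≤ (c₂^2*c₁*MZ*M^n) * (t^((n:ℝ)) * a) := by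
        refine mul_le_mul h5 h6 (mul_nonneg hw ht0.le) hC3
      have hexp : MX*M^n * t^((n:ℝ))
          = c₁*c₂*c₃*M^n*t^((n:ℝ)) + c₁*c₂*c₃*atil*M^n*t^((n:ℝ))
            + (c₂^2*c₁*MZ*M^n) * (t^((n:ℝ)) * a) := by
        rw [hMX, hMZ]; ring
      linarith
    -- X (n+1) bound
    have hXb : ∀ x ∈ Set.Ioc (0:ℝ) a,
        ‖X (n+1) x‖ ≤ c₁ * MX * M ^ n * x ^ (((n:ℝ)+1) + κ) := by
      intro x hx
      have hInt := norm_int_le _ x (MX*M^n) ((n:ℝ)) hx.1 (by linarith)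
        (mul_nonneg hMX0 hMn) (fun t ht => hXint t ⟨ht.1, ht.2.trans hx.2⟩)
      rw [hXrec n x hx]
      have hnc : ‖((n:ℂ)+1)‖ = (n:ℝ)+1 := by
        rw [show ((n:ℂ)+1) = ((n+1:ℕ):ℂ) by push_cast; ring, Complex.norm_natCast]
        push_cast; ring
      rw [norm_mul, norm_mul, hnc]
      have hfx := hfb x hx
      have hxk : (0:ℝ) ≤ x ^ κ := Real.rpow_nonneg hx.1.le _
      calc ((n:ℝ)+1) * ‖f x‖ * ‖∫ t in (0:ℝ)..x,
            (-(r₂₁ t / f t) * X n t - r₂₂ t / f t * Y n t + p₂ t / f t ^ 2 * Z n t)‖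
          ≤ ((n:ℝ)+1) * (c₁ * x ^ κ) * ((MX*M^n) * x ^ ((n:ℝ)+1) / ((n:ℝ)+1)) := by
            refine mul_le_mul ?_ hInt (norm_nonneg _) ?_
            · exact mul_le_mul_of_nonneg_left hfx hn1.le
            · exact mul_nonneg hn1.le (mul_nonneg hc₁0 hxk)
        _ = c₁ * MX * M ^ n * x ^ (((n:ℝ)+1) + κ) := by
            have e : x^κ * x^((n:ℝ)+1) = x^(((n:ℝ)+1)+κ) := by
              rw [← Real.rpow_add hx.1, show κ + ((n:ℝ)+1) = ((n:ℝ)+1)+κ by ring]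
            have hne : ((n:ℝ)+1) ≠ 0 := hn1.ne'
            rw [← e]
            field_simp
    intro x hx
    refine ⟨hXb x hx, ?_⟩
    rw [hYrec n x hx]
    have hZx := hZb x hx
    have hXx := hXb x hx
    have hfi := hfinv x hx
    have hxk : (0:ℝ) ≤ x ^ (-κ) := Real.rpow_nonneg hx.1.le _
    have hZnn : (0:ℝ) ≤ (c₁*MZ*M^n) * x^((n:ℝ)+2*κ+1)/((n:ℝ)+1) :=
      div_nonneg (mul_nonneg hCZ (Real.rpow_nonneg hx.1.le _)) hn1.le
    have hnc : ‖((n:ℂ)+1)‖ = (n:ℝ)+1 := by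
      rw [show ((n:ℂ)+1) = ((n+1:ℕ):ℂ) by push_cast; ring, Complex.norm_natCast]
      push_cast; ring
    have idA : x^((n:ℝ)+2*κ+1) * x^(-κ) = x^(((n:ℝ)+1)+κ) := by
      rw [← Real.rpow_add hx.1, show ((n:ℝ)+2*κ+1) + -κ = ((n:ℝ)+1)+κ by ring]
    have idB : x^(κ+1) * x^(-κ) = x := by
      rw [← Real.rpow_add hx.1, show (κ+1) + -κ = (1:ℝ) by ring, Real.rpow_one]
    have h1 : ‖((n:ℂ)+1) * Z n x / f x‖ ≤ c₂*MZ*(c₁*M^n) * x^(((n:ℝ)+1)+κ) := by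
      rw [div_eq_mul_inv, norm_mul, norm_mul, hnc]
      calc ((n:ℝ)+1) * ‖Z n x‖ * ‖(f x)⁻¹‖
          ≤ ((n:ℝ)+1) * ((c₁*MZ*M^n) * x^((n:ℝ)+2*κ+1)/((n:ℝ)+1)) * (c₂ * x^(-κ)) := by
            refine mul_le_mul ?_ hfi (norm_nonneg _) ?_
            · exact mul_le_mul_of_nonneg_left hZx hn1.le
            · exact mul_nonneg hn1.le hZnn
        _ = (c₂*MZ*(c₁*M^n)) * (x^((n:ℝ)+2*κ+1) * x^(-κ)) := by
            have hne : ((n:ℝ)+1) ≠ 0 := hn1.ne'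
            field_simp
        _ = c₂*MZ*(c₁*M^n) * x^(((n:ℝ)+1)+κ) := by rw [idA]
    have hXxnn : (0:ℝ) ≤ c₁ * MX * M ^ n * x ^ (((n:ℝ)+1) + κ) :=
      mul_nonneg (mul_nonneg (mul_nonneg hc₁0 hMX0) hMn) (Real.rpow_nonneg hx.1.le _)
    have h2 : ‖g x / f x * X (n+1) x‖
        ≤ (c₁*c₂*atil*MX)*(c₁*M^n) * x^(((n:ℝ)+1)+κ) := by
      rw [norm_mul]
      have hgf : ‖g x / f x‖ ≤ (c₁ * x^(κ+1)) * (c₂ * x^(-κ)) := by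
        rw [div_eq_mul_inv, norm_mul]
        exact mul_le_mul (hgb x hx) hfi (norm_nonneg _)
          (mul_nonneg hc₁0 (Real.rpow_nonneg hx.1.le _))
      calc ‖g x / f x‖ * ‖X (n+1) x‖
          ≤ ((c₁ * x^(κ+1)) * (c₂ * x^(-κ))) * (c₁ * MX * M ^ n * x ^ (((n:ℝ)+1) + κ)) :=
            mul_le_mul hgf hXx (norm_nonneg _)
              (mul_nonneg (mul_nonneg hc₁0 (Real.rpow_nonneg hx.1.le _))
                (mul_nonneg hc₂0 hxk))
        _ = (c₁*c₂*MX)*(c₁*M^n) * ((x^(κ+1) * x^(-κ)) * x^(((n:ℝ)+1)+κ)) := by ring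
        _ = (c₁*c₂*MX)*(c₁*M^n) * (x * x^(((n:ℝ)+1)+κ)) := by rw [idB]
        _ ≤ (c₁*c₂*atil*MX)*(c₁*M^n) * x^(((n:ℝ)+1)+κ) := by
            have hxat : x ≤ atil := hx.2.trans haat
            have hwn : (0:ℝ) ≤ x^(((n:ℝ)+1)+κ) := Real.rpow_nonneg hx.1.le _
            have hcc : (0:ℝ) ≤ (c₁*c₂*MX)*(c₁*M^n) := by
              have := mul_nonneg (mul_nonneg (mul_nonneg hc₁0 hc₂0) hMX0)
                (mul_nonneg hc₁0 hMn)
              linarith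
            nlinarith [mul_le_mul_of_nonneg_right hxat hwn]
    have hsum : c₂*MZ*(c₁*M^n) * x^(((n:ℝ)+1)+κ)
        + (c₁*c₂*atil*MX)*(c₁*M^n) * x^(((n:ℝ)+1)+κ)
        = c₁ * M^(n+1) * x^(((n:ℝ)+1)+κ) := by
      rw [hM, pow_succ]; ring
    calc ‖((n:ℂ)+1) * Z n x / f x + g x / f x * X (n+1) x‖
        ≤ ‖((n:ℂ)+1) * Z n x / f x‖ + ‖g x / f x * X (n+1) x‖ := norm_add_le _ _
      _ ≤ c₂*MZ*(c₁*M^n) * x^(((n:ℝ)+1)+κ)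
          + (c₁*c₂*atil*MX)*(c₁*M^n) * x^(((n:ℝ)+1)+κ) := add_le_add h1 h2
      _ = c₁ * M^(n+1) * x^(((n:ℝ)+1)+κ) := hsum
  -- invariant
  have main : ∀ n : ℕ, ∀ t ∈ Set.Ioc (0:ℝ) a,
      ‖X n t‖ ≤ c₁ * M ^ n * t ^ ((n:ℝ) + κ) ∧
      ‖Y n t‖ ≤ c₁ * atil * M ^ n * t ^ ((n:ℝ) + κ) := by
    intro n
    induction n with
    | zero =>
      intro t ht
      simp only [hX0, hY0, Nat.cast_zero, pow_zero, mul_one, zero_add]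
      constructor
      · simpa using hfb t ht
      · have hg := hgb t ht
        have e1 : t ^ (κ+1) ≤ atil * t ^ κ := by
          rw [Real.rpow_add_one ht.1.ne' κ]
          nlinarith [Real.rpow_nonneg ht.1.le κ, ht.2.trans haat]
        have := mul_le_mul_of_nonneg_left e1 hc₁0
        calc ‖g t‖ ≤ c₁ * t ^ (κ+1) := hg
          _ ≤ c₁ * (atil * t ^ κ) := this
          _ = c₁ * atil * (t ^ κ) := by ring
    | succ m ih =>
      intro t ht
      obtain ⟨h1, h2⟩ := key m ih t ht
      have hMn : (0:ℝ) ≤ M ^ m := pow_nonneg hM0 m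
      have hte : (0:ℝ) ≤ t ^ (((m:ℝ)+1)+κ) := Real.rpow_nonneg ht.1.le _
      have hcast : ((m+1:ℕ):ℝ) + κ = ((m:ℝ)+1) + κ := by push_cast; ring
      rw [hcast]
      constructor
      · refine h1.trans ?_
        have h3 : c₁*MX*M^m ≤ c₁*M^(m+1) := by
          rw [pow_succ]
          nlinarith [mul_le_mul_of_nonneg_left (mul_le_mul_of_nonneg_right hMXM hMn) hc₁0]
        exact mul_le_mul_of_nonneg_right h3 hte
      · refine h2.trans ?_
        have hMn1 : (0:ℝ) ≤ M ^ (m+1) := pow_nonneg hM0 (m+1)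
        nlinarith [mul_nonneg (mul_nonneg hc₁0 hMn1) hte]
  -- conclusion
  intro n hn x hx
  obtain ⟨m, rfl⟩ : ∃ m, n = m + 1 := ⟨n-1, by omega⟩
  obtain ⟨h1, h2⟩ := key m (main m) x hx
  have hcast : ((m+1:ℕ):ℝ) + κ = ((m:ℝ)+1) + κ := by push_cast; ring
  rw [hcast]
  have hMn : (0:ℝ) ≤ M ^ m := pow_nonneg hM0 m
  have hte : (0:ℝ) ≤ x ^ (((m:ℝ)+1)+κ) := Real.rpow_nonneg hx.1.le _
  refine ⟨h1.trans ?_, h2⟩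
  have h3 : c₁*MX*M^m ≤ c₁*M^(m+1) := by
    rw [pow_succ]
    nlinarith [mul_le_mul_of_nonneg_left (mul_le_mul_of_nonneg_right hMXM hMn) hc₁0]
  exact mul_le_mul_of_nonneg_right h3 hte
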